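/- Let G = ⟨a, b, c ∣ a²b = ba², ...⟩ be the presented group B₂(Σ₁,₀), with projection p : G → W and weight homomorphisms ℓ_â, ℓ_b̂ as above. Then g, h ∈ G are conjugate in G if and only if ℓ_â(g) = ℓ_â(h), ℓ_b̂(g) = ℓ_b̂(h), and p(g), p(h) are conjugate in W. -/

import Mathlib

/-- Relations of the presentation `⟨a,b,c ∣ a²b=ba², b²a=ab², a²c=ca², b²c=cb², a²b²=c²⟩`
of the braid group `B₂(Σ_{1,0})`, as elements of the free group on `a = 0`, `b = 1`, `c = 2`. -/
def grels : Set (FreeGroup (Fin 3)) :=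
  { FreeGroup.of 0 ^ 2 * FreeGroup.of 1 * (FreeGroup.of 1 * FreeGroup.of 0 ^ 2)⁻¹,
    FreeGroup.of 1 ^ 2 * FreeGroup.of 0 * (FreeGroup.of 0 * FreeGroup.of 1 ^ 2)⁻¹,
    FreeGroup.of 0 ^ 2 * FreeGroup.of 2 * (FreeGroup.of 2 * FreeGroup.of 0 ^ 2)⁻¹,
    FreeGroup.of 1 ^ 2 * FreeGroup.of 2 * (FreeGroup.of 2 * FreeGroup.of 1 ^ 2)⁻¹,
    FreeGroup.of 0 ^ 2 * FreeGroup.of 1 ^ 2 * (FreeGroup.of 2 ^ 2)⁻¹ }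

/-- Relations `a² = b² = c² = 1` of the universal Coxeter group `W(a,b,c)`. -/
def wrels : Set (FreeGroup (Fin 3)) :=
  { FreeGroup.of 0 ^ 2, FreeGroup.of 1 ^ 2, FreeGroup.of 2 ^ 2 }

/-- The braid group `B₂(Σ_{1,0})` via the presentation above. -/
abbrev G := PresentedGroup grels

/-- The universal Coxeter group `W(a,b,c) = ℤ/2 * ℤ/2 * ℤ/2`. -/
abbrev W := PresentedGroup wrels

def ga : G := PresentedGroup.of 0
def gb : G := PresentedGroup.of 1
def gc : G := PresentedGroup.of 2
def wa : W := PresentedGroup.of 0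
def wb : W := PresentedGroup.of 1
def wc : W := PresentedGroup.of 2

namespace Stmt15Aux

/-- Relators map to `1` in a presented group. -/
lemma mk_rel {α : Type*} {rels : Set (FreeGroup α)} {r : FreeGroup α} (h : r ∈ rels) :
    PresentedGroup.mk rels r = 1 :=
  (QuotientGroup.eq_one_iff r).2 (Subgroup.subset_normalClosure h)

lemma grel1 : ga ^ 2 * gb = gb * ga ^ 2 := by
  have h := mk_rel (rels := grels)
    (r := FreeGroup.of 0 ^ 2 * FreeGroup.of 1 * (FreeGroup.of 1 * FreeGroup.of 0 ^ 2)⁻¹)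
    (by simp [grels])
  rw [map_mul, map_inv, map_mul, map_mul, map_pow] at h
  exact mul_inv_eq_one.mp h

lemma grel2 : gb ^ 2 * ga = ga * gb ^ 2 := by
  have h := mk_rel (rels := grels)
    (r := FreeGroup.of 1 ^ 2 * FreeGroup.of 0 * (FreeGroup.of 0 * FreeGroup.of 1 ^ 2)⁻¹)
    (by simp [grels])
  rw [map_mul, map_inv, map_mul, map_mul, map_pow] at h
  exact mul_inv_eq_one.mp h

lemma grel3 : ga ^ 2 * gc = gc * ga ^ 2 := by
  have h := mk_rel (rels := grels)
    (r := FreeGroup.of 0 ^ 2 * FreeGroup.of 2 * (FreeGroup.of 2 * FreeGroup.of 0 ^ 2)⁻¹)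
    (by simp [grels])
  rw [map_mul, map_inv, map_mul, map_mul, map_pow] at h
  exact mul_inv_eq_one.mp h

lemma grel4 : gb ^ 2 * gc = gc * gb ^ 2 := by
  have h := mk_rel (rels := grels)
    (r := FreeGroup.of 1 ^ 2 * FreeGroup.of 2 * (FreeGroup.of 2 * FreeGroup.of 1 ^ 2)⁻¹)
    (by simp [grels])
  rw [map_mul, map_inv, map_mul, map_mul, map_pow] at h
  exact mul_inv_eq_one.mp h

lemma grel5 : ga ^ 2 * gb ^ 2 = gc ^ 2 := by
  have h := mk_rel (rels := grels)
    (r := FreeGroup.of 0 ^ 2 * FreeGroup.of 1 ^ 2 * (FreeGroup.of 2 ^ 2)⁻¹)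
    (by simp [grels])
  rw [map_mul, map_inv, map_mul, map_pow, map_pow, map_pow] at h
  exact mul_inv_eq_one.mp h

lemma wa_sq : wa ^ 2 = 1 := by
  have h := mk_rel (rels := wrels) (r := FreeGroup.of 0 ^ 2) (by simp [wrels])
  rwa [map_pow] at h

lemma wb_sq : wb ^ 2 = 1 := by
  have h := mk_rel (rels := wrels) (r := FreeGroup.of 1 ^ 2) (by simp [wrels])
  rwa [map_pow] at h

def gen (i : Fin 3) : G := PresentedGroup.of i
def wgen (i : Fin 3) : W := PresentedGroup.of i

lemma comm_all {z : G} (h : ∀ i : Fin 3, gen i * z = z * gen i) (g : G) : z * g = g * z := by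
  have hg : g ∈ Subgroup.centralizer {z} := by
    apply PresentedGroup.generated_by
    intro j
    rw [Subgroup.mem_centralizer_iff]
    intro y hy
    rcases hy with rfl
    exact (h j).symm
  exact (Subgroup.mem_centralizer_iff.mp hg) z rfl

lemma CA (g : G) : Commute (ga ^ 2) g := by
  apply comm_all
  intro i
  fin_cases i
  · exact (Commute.pow_self ga 2).eq
  · exact grel1.symm
  · exact grel3.symm

lemma CB (g : G) : Commute (gb ^ 2) g := by
  apply comm_all
  intro i
  fin_cases i
  · exact grel2.symm
  · exact (Commute.pow_self gb 2).eq
  · exact grel4.symm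

/-- Central elements `a^{2m} b^{2n}`. -/
def Z (m n : ℤ) : G := (ga ^ 2) ^ m * (gb ^ 2) ^ n

lemma Z_comm (m n : ℤ) (g : G) : Commute (Z m n) g :=
  ((CA g).zpow_left m).mul_left ((CB g).zpow_left n)

lemma Z_mul (a b m n : ℤ) : Z a b * Z m n = Z (a + m) (b + n) := by
  have h : Commute ((gb ^ 2) ^ b) ((ga ^ 2) ^ m) := ((CA (gb ^ 2)).symm.zpow_zpow b m)
  unfold Z
  rw [h.mul_mul_mul_comm, ← zpow_add, ← zpow_add]

lemma Z_zero : Z 0 0 = 1 := by simp [Z]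

lemma Z_inv (m n : ℤ) : (Z m n)⁻¹ = Z (-m) (-n) := by
  apply inv_eq_of_mul_eq_one_right
  rw [Z_mul]
  simp [Z_zero]

lemma Z_swap (m n : ℤ) (x y : G) : x * (Z m n * y) = Z m n * (x * y) := by
  rw [← mul_assoc, ← (Z_comm m n x).eq, mul_assoc]

def e1 : Fin 3 → ℤ := ![1, 0, 1]
def e2 : Fin 3 → ℤ := ![0, 1, 1]

lemma gen_sq (i : Fin 3) : gen i ^ 2 = Z (e1 i) (e2 i) := by
  fin_cases i
  · show ga ^ 2 = Z 1 0
    simp [Z]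
  · show gb ^ 2 = Z 0 1
    simp [Z]
  · show gc ^ 2 = Z 1 1
    simp only [Z, zpow_one]
    exact grel5.symm

def tG (u : List (Fin 3)) : G := (u.map gen).prod
def tW (u : List (Fin 3)) : W := (u.map wgen).prod

lemma tG_cons (i : Fin 3) (u : List (Fin 3)) : tG (i :: u) = gen i * tG u := by
  simp [tG]

lemma tW_cons (i : Fin 3) (u : List (Fin 3)) : tW (i :: u) = wgen i * tW u := by
  simp [tW]

lemma step (i : Fin 3) (m n : ℤ) (u : List (Fin 3)) (hu : u.Chain' (· ≠ ·)) :
    ∃ m' n' : ℤ, ∃ v : List (Fin 3), v.Chain' (· ≠ ·) ∧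
      gen i * (Z m n * tG u) = Z m' n' * tG v := by
  match u, hu with
  | [], _ =>
    refine ⟨m, n, [i], List.isChain_singleton i, ?_⟩
    rw [Z_swap, tG_cons i []]
  | j :: v, hu =>
    by_cases hij : j = i
    · subst hij
      refine ⟨m + e1 j, n + e2 j, v, hu.tail, ?_⟩
      rw [tG_cons j v, Z_swap, ← mul_assoc (gen j) (gen j), ← pow_two, gen_sq,
        ← mul_assoc, Z_mul]
    · refine ⟨m, n, i :: j :: v, List.isChain_cons_cons.mpr ⟨fun e => hij e.symm, hu⟩, ?_⟩
      rw [Z_swap, tG_cons i (j :: v)]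

lemma stepInv (i : Fin 3) (m n : ℤ) (u : List (Fin 3)) (hu : u.Chain' (· ≠ ·)) :
    ∃ m' n' : ℤ, ∃ v : List (Fin 3), v.Chain' (· ≠ ·) ∧
      (gen i)⁻¹ * (Z m n * tG u) = Z m' n' * tG v := by
  obtain ⟨m', n', v, hv, hstep⟩ := step i m n u hu
  refine ⟨-e1 i + m', -e2 i + n', v, hv, ?_⟩
  have h1 : (gen i)⁻¹ = Z (-e1 i) (-e2 i) * gen i := by
    rw [← Z_inv, ← gen_sq]
    group
  rw [h1, mul_assoc, hstep, ← mul_assoc, Z_mul]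

lemma decomp (g : G) :
    ∃ m n : ℤ, ∃ u : List (Fin 3), u.Chain' (· ≠ ·) ∧ g = Z m n * tG u := by
  have hg : g ∈ Subgroup.closure (Set.range (PresentedGroup.of : Fin 3 → G)) := by
    rw [PresentedGroup.closure_range_of]
    exact Subgroup.mem_top g
  induction hg using Subgroup.closure_induction_left with
  | one => exact ⟨0, 0, [], List.isChain_nil, by simp [Z_zero, tG]⟩
  | mul_left x hx y hy ih =>
    obtain ⟨i, rfl⟩ := hx
    obtain ⟨m, n, u, hu, rfl⟩ := ih
    obtain ⟨m', n', v, hv, he⟩ := step i m n u hu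
    exact ⟨m', n', v, hv, he⟩
  | inv_mul_cancel x hx y hy ih =>
    obtain ⟨i, rfl⟩ := hx
    obtain ⟨m, n, u, hu, rfl⟩ := ih
    obtain ⟨m', n', v, hv, he⟩ := stepInv i m n u hu
    exact ⟨m', n', v, hv, he⟩

/-! ### The van der Waerden action of `W` on reduced words -/

abbrev RW := { l : List (Fin 3) // l.Chain' (· ≠ ·) }

def actL (i : Fin 3) : List (Fin 3) → List (Fin 3)
  | [] => [i]
  | j :: t => if j = i then t else i :: j :: t

lemma actL_chain (i : Fin 3) :
    ∀ {l : List (Fin 3)}, l.Chain' (· ≠ ·) → (actL i l).Chain' (· ≠ ·)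
  | [], _ => List.isChain_singleton i
  | j :: t, h => by
    by_cases hj : j = i
    · simpa [actL, hj, List.Chain'] using h.tail
    · simpa [actL, hj, List.Chain'] using List.isChain_cons_cons.mpr ⟨fun e => hj e.symm, h⟩

lemma actL_actL (i : Fin 3) :
    ∀ {l : List (Fin 3)}, l.Chain' (· ≠ ·) → actL i (actL i l) = l
  | [], _ => by simp [actL]
  | j :: t, h => by
    by_cases hj : j = i
    · subst hj
      cases t with
      | nil => simp [actL]
      | cons k s =>
        have hk : ¬k = j := fun e => (List.isChain_cons_cons.mp h).1 e.symm
        simp [actL, hk]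
    · simp [actL, hj]

def actE (i : Fin 3) : Equiv.Perm RW where
  toFun l := ⟨actL i l.1, actL_chain i l.2⟩
  invFun l := ⟨actL i l.1, actL_chain i l.2⟩
  left_inv l := Subtype.ext (actL_actL i l.2)
  right_inv l := Subtype.ext (actL_actL i l.2)

lemma actE_sq (i : Fin 3) : actE i ^ 2 = 1 := by
  apply Equiv.ext
  intro l
  simp only [pow_two, Equiv.Perm.mul_apply, Equiv.Perm.one_apply]
  apply Subtype.ext
  exact actL_actL i l.2

def ρ : W →* Equiv.Perm RW :=
  PresentedGroup.toGroup (f := actE) (by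
    intro r hr
    have h3 : ∀ i : Fin 3, FreeGroup.lift actE (FreeGroup.of i ^ 2) = 1 := by
      intro i
      rw [map_pow, FreeGroup.lift_apply_of]
      exact actE_sq i
    simp only [wrels, Set.mem_insert_iff, Set.mem_singleton_iff] at hr
    rcases hr with rfl | rfl | rfl <;> exact h3 _)

lemma ρ_of (i : Fin 3) : ρ (wgen i) = actE i :=
  PresentedGroup.toGroup.of _

lemma rho_tW : ∀ (u : List (Fin 3)) (hu : u.Chain' (· ≠ ·)),
    ρ (tW u) ⟨[], List.isChain_nil⟩ = ⟨u, hu⟩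
  | [], _ => by simp [tW]
  | i :: v, hu => by
    have hv : v.Chain' (· ≠ ·) := hu.tail
    rw [tW_cons, map_mul, Equiv.Perm.mul_apply, rho_tW v hv, ρ_of]
    apply Subtype.ext
    show actL i v = i :: v
    cases v with
    | nil => rfl
    | cons k s =>
      have hk : ¬k = i := fun e => (List.isChain_cons_cons.mp hu).1 e.symm
      simp [actL, hk]

lemma tW_inj {u v : List (Fin 3)} (hu : u.Chain' (· ≠ ·)) (hv : v.Chain' (· ≠ ·))
    (h : tW u = tW v) : u = v := by
  have h1 := rho_tW u hu
  rw [h, rho_tW v hv] at h1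
  exact (congrArg Subtype.val h1).symm

/-! ### Evaluation of `p`, `ℓa`, `ℓb` on the normal form -/

lemma p_gen (p : G →* W) (hpa : p ga = wa) (hpb : p gb = wb) (hpc : p gc = wc)
    (i : Fin 3) : p (gen i) = wgen i := by
  fin_cases i
  · exact hpa
  · exact hpb
  · exact hpc

lemma p_Z (p : G →* W) (hpa : p ga = wa) (hpb : p gb = wb) (m n : ℤ) :
    p (Z m n) = 1 := by
  rw [Z, map_mul, map_zpow, map_zpow, map_pow, map_pow, hpa, hpb, wa_sq, wb_sq]
  simp

lemma p_tG (p : G →* W) (hpa : p ga = wa) (hpb : p gb = wb) (hpc : p gc = wc) :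
    ∀ u : List (Fin 3), p (tG u) = tW u
  | [] => by simp [tG, tW]
  | i :: v => by
    rw [tG_cons, map_mul, p_gen p hpa hpb hpc, p_tG p hpa hpb hpc v, tW_cons]

lemma toAdd_ℓZ (ℓ : G →* Multiplicative ℤ) (x y : ℤ)
    (hx : ℓ ga = Multiplicative.ofAdd x) (hy : ℓ gb = Multiplicative.ofAdd y)
    (m n : ℤ) : (ℓ (Z m n)).toAdd = m * (2 * x) + n * (2 * y) := by
  rw [Z, map_mul, map_zpow, map_zpow, map_pow, map_pow, hx, hy]
  rw [toAdd_mul, toAdd_zpow, toAdd_zpow, toAdd_pow, toAdd_pow, toAdd_ofAdd, toAdd_ofAdd]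
  simp only [smul_eq_mul, nsmul_eq_mul]
  push_cast
  ring

/-- The key injectivity: `(ℓa, ℓb, p)` is jointly injective on `G`. -/
lemma key_inj (p : G →* W) (hpa : p ga = wa) (hpb : p gb = wb) (hpc : p gc = wc)
    (ℓa ℓb : G →* Multiplicative ℤ)
    (ha0 : ℓa ga = Multiplicative.ofAdd 0) (ha1 : ℓa gb = Multiplicative.ofAdd 1)
    (hb0 : ℓb gb = Multiplicative.ofAdd 0) (hb1 : ℓb ga = Multiplicative.ofAdd 1)
    (g h : G) (ea : ℓa g = ℓa h) (eb : ℓb g = ℓb h) (ep : p g = p h) : g = h := by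
  obtain ⟨m, n, u, hu, rfl⟩ := decomp g
  obtain ⟨m', n', v, hv, rfl⟩ := decomp h
  have hw : tW u = tW v := by
    rw [map_mul, map_mul, p_Z p hpa hpb, p_Z p hpa hpb, one_mul, one_mul,
      p_tG p hpa hpb hpc, p_tG p hpa hpb hpc] at ep
    exact ep
  obtain rfl : u = v := tW_inj hu hv hw
  rw [map_mul, map_mul] at ea eb
  have hZa := mul_right_cancel ea
  have hZb := mul_right_cancel eb
  have hZa' := congrArg Multiplicative.toAdd hZa
  have hZb' := congrArg Multiplicative.toAdd hZb
  rw [toAdd_ℓZ ℓa 0 1 ha0 ha1, toAdd_ℓZ ℓa 0 1 ha0 ha1] at hZa'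
  rw [toAdd_ℓZ ℓb 1 0 hb1 hb0, toAdd_ℓZ ℓb 1 0 hb1 hb0] at hZb'
  obtain rfl : n = n' := by omega
  obtain rfl : m = m' := by omega
  rfl

lemma p_surj (p : G →* W) (hpa : p ga = wa) (hpb : p gb = wb) (hpc : p gc = wc) :
    Function.Surjective p := by
  intro w
  have hw : w ∈ p.range := by
    apply PresentedGroup.generated_by
    intro j
    fin_cases j
    · exact ⟨ga, hpa⟩
    · exact ⟨gb, hpb⟩
    · exact ⟨gc, hpc⟩
  exact hw

end Stmt15Aux

open Stmt15Aux in
theorem stmt_15 (p : G →* W) (hpa : p ga = wa) (hpb : p gb = wb) (hpc : p gc = wc)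
    (ℓa ℓb : G →* Multiplicative ℤ)
    (ha0 : ℓa ga = Multiplicative.ofAdd 0) (ha1 : ℓa gb = Multiplicative.ofAdd 1)
    (ha2 : ℓa gc = Multiplicative.ofAdd 1)
    (hb0 : ℓb gb = Multiplicative.ofAdd 0) (hb1 : ℓb ga = Multiplicative.ofAdd 1)
    (hb2 : ℓb gc = Multiplicative.ofAdd 1) (g h : G) :
    IsConj g h ↔ ℓa g = ℓa h ∧ ℓb g = ℓb h ∧ IsConj (p g) (p h) := by
  constructor
  · intro hgh
    exact ⟨isConj_iff_eq.mp (ℓa.map_isConj hgh), isConj_iff_eq.mp (ℓb.map_isConj hgh),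
      p.map_isConj hgh⟩
  · rintro ⟨e1, e2, hconj⟩
    obtain ⟨c, hc⟩ := isConj_iff.mp hconj
    obtain ⟨x, rfl⟩ := p_surj p hpa hpb hpc c
    rw [isConj_iff]
    refine ⟨x, key_inj p hpa hpb hpc ℓa ℓb ha0 ha1 hb0 hb1 (x * g * x⁻¹) h ?_ ?_ ?_⟩
    · rw [map_mul, map_mul, map_inv, mul_inv_cancel_comm]
      exact e1
    · rw [map_mul, map_mul, map_inv, mul_inv_cancel_comm]
      exact e2
    · rw [map_mul, map_mul, map_inv]
      exact hc
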